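/- Let 0 ≤ δ ≤ 1/2 and let σ_x, indexed by x = (x₀,x₁) ∈ {0,1}², be density matrices on ℂ^n whose sum S = Σ_x σ_x is positive definite. Assume that for every (x₀,x₁) ∈ {0,1}² the complement pair satisfies F(σ_{(x₀,x₁)}, σ_{(x₀⊕1, x₁⊕1)}) ≤ 2√(δ(1−δ)), and let f be the maximum of F(σ_x, σ_{x'}) over ordered pairs of distinct indices. Then the pretty good measurement success probability satisfies (1/4)·Σ_x Tr(S^{-1/2}·σ_x·S^{-1/2}·σ_x) ≥ 1 − f − √(δ(1−δ)). -/

import Mathlib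

open Matrix Kronecker ComplexOrder
open scoped MatrixOrder

/-- The trace norm `‖A‖₁ = Tr √(Aᴴ A)` of a complex matrix. -/
noncomputable def traceNorm {n : Type*} [Fintype n] [DecidableEq n] (A : Matrix n n ℂ) : ℝ :=
  ((CFC.sqrt (Aᴴ * A)).trace).re

/-- The trace distance `Δ(ρ,σ) = ‖ρ - σ‖₁ / 2`. -/
noncomputable def traceDist {n : Type*} [Fintype n] [DecidableEq n] (ρ σ : Matrix n n ℂ) : ℝ :=
  traceNorm (ρ - σ) / 2

open scoped Classical in
/-- Positive semidefinite square root (junk value `0` on non-PSD matrices). -/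
noncomputable def psdSqrt {n : Type*} [Fintype n] [DecidableEq n] (A : Matrix n n ℂ) :
    Matrix n n ℂ :=
  if h : A.PosSemidef then CFC.sqrt A else 0

/-- The fidelity `F(ρ,σ) = ‖√ρ √σ‖₁`. -/
noncomputable def fidelity {n : Type*} [Fintype n] [DecidableEq n] (ρ σ : Matrix n n ℂ) : ℝ :=
  traceNorm (psdSqrt ρ * psdSqrt σ)

/-- A density matrix: positive semidefinite with trace 1. -/
def IsDensityMatrix {n : Type*} [Fintype n] [DecidableEq n] (ρ : Matrix n n ℂ) : Prop :=
  ρ.PosSemidef ∧ ρ.trace = 1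

/-- The projector `|b⟩⟨b|` on ℂ². -/
noncomputable def proj (b : Bool) : Matrix Bool Bool ℂ := Matrix.single b b 1

/-- The strong oblivious transfer channel `F_{(x₀,x₁)}`. -/
noncomputable def sotChannel (x₀ x₁ : Bool) (ρ : Matrix (Bool × Bool) (Bool × Bool) ℂ) :
    Matrix (Bool × Bool) (Bool × Bool) ℂ :=
  ∑ i : Bool, ∑ i' : Bool,
    ρ (i, i') (i, i') •
      (((1/2 : ℂ) • (1 : Matrix Bool Bool ℂ)) ⊗ₖ proj (xor (bif xor i i' then x₁ else x₀) i'))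


namespace StmtAux

open Matrix

variable {κ : Type*} [Fintype κ] [DecidableEq κ]

lemma psd_sqrt_psd {A : Matrix κ κ ℂ} (h : A.PosSemidef) : (CFC.sqrt A).PosSemidef :=
  Matrix.nonneg_iff_posSemidef.mp (CFC.sqrt_nonneg A)

lemma psd_sqrt_mul_self {A : Matrix κ κ ℂ} (h : A.PosSemidef) : CFC.sqrt A * CFC.sqrt A = A :=
  CFC.sqrt_mul_sqrt_self A (Matrix.nonneg_iff_posSemidef.mpr h)

lemma psd_eq_sqrt_of_sq_eq {A B : Matrix κ κ ℂ} (hB : B.PosSemidef) (hA : A.PosSemidef)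
    (h : B ^ 2 = A) : B = CFC.sqrt A :=
  (CFC.sqrt_unique (by rw [← pow_two]; exact h) (Matrix.nonneg_iff_posSemidef.mpr hB)).symm

lemma sqrt_congr {A A' : Matrix κ κ ℂ} (h : A = A') (hA : A.PosSemidef) (hA' : A'.PosSemidef) :
    CFC.sqrt A = CFC.sqrt A' := by subst h; rfl

lemma traceNorm_eq_trace_sqrt {A : Matrix κ κ ℂ} {B : Matrix κ κ ℂ} (hB : B.PosSemidef)
    (h : Aᴴ * A = B) : traceNorm A = ((CFC.sqrt B).trace).re := by
  rw [traceNorm, sqrt_congr h (posSemidef_conjTranspose_mul_self A) hB]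

noncomputable def Uof {R : Matrix κ κ ℂ} (hR : R.IsHermitian) : Matrix κ κ ℂ :=
  (hR.eigenvectorUnitary : Matrix κ κ ℂ)

lemma Uof_star_mul {R : Matrix κ κ ℂ} (hR : R.IsHermitian) : (Uof hR)ᴴ * (Uof hR) = 1 := by
  rw [Uof, ← Matrix.star_eq_conjTranspose]; exact hR.eigenvectorUnitary.2.1

lemma Uof_mul_star {R : Matrix κ κ ℂ} (hR : R.IsHermitian) : (Uof hR) * (Uof hR)ᴴ = 1 := by
  rw [Uof, ← Matrix.star_eq_conjTranspose]; exact hR.eigenvectorUnitary.2.2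

lemma spec_rep {R : Matrix κ κ ℂ} (hR : R.IsHermitian) :
    R = Uof hR * diagonal (fun i => (hR.eigenvalues i : ℂ)) * (Uof hR)ᴴ := by
  have := hR.spectral_theorem
  rw [Uof, ← Matrix.star_eq_conjTranspose]
  exact this

lemma sandwich_mul (U : Matrix κ κ ℂ) (hU : Uᴴ * U = 1) (d e : κ → ℂ) :
    (U * diagonal d * Uᴴ) * (U * diagonal e * Uᴴ)
      = U * diagonal (fun i => d i * e i) * Uᴴ := by
  have : diagonal d * (Uᴴ * U) * diagonal e = diagonal (fun i => d i * e i) := by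
    rw [hU, Matrix.mul_one, diagonal_mul_diagonal]
  calc (U * diagonal d * Uᴴ) * (U * diagonal e * Uᴴ)
      = U * (diagonal d * (Uᴴ * U) * diagonal e) * Uᴴ := by
        simp only [Matrix.mul_assoc]
    _ = U * diagonal (fun i => d i * e i) * Uᴴ := by rw [this]

lemma trace_sandwich (U : Matrix κ κ ℂ) (hU : Uᴴ * U = 1) (d : κ → ℂ) :
    (U * diagonal d * Uᴴ).trace = ∑ i, d i := by
  rw [trace_mul_cycle, hU, Matrix.one_mul, trace_diagonal]

lemma trace_diagonal_mul (d : κ → ℂ) (X : Matrix κ κ ℂ) :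
    (diagonal d * X).trace = ∑ i, d i * X i i := by
  simp [Matrix.trace, Matrix.diag, Matrix.mul_apply, diagonal_apply, Finset.sum_ite_eq,
    Finset.mem_univ]

/-- trace norm of a Hermitian matrix is the sum of the absolute values of eigenvalues -/
lemma traceNorm_eq_sum_abs {R : Matrix κ κ ℂ} (hR : R.IsHermitian) :
    traceNorm R = ∑ i, |hR.eigenvalues i| := by
  set U := Uof hR with hUdef
  have hU : Uᴴ * U = 1 := Uof_star_mul hR
  set W := U * diagonal (fun i => ((|hR.eigenvalues i| : ℝ) : ℂ)) * Uᴴ with hWdef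
  have hWpsd : W.PosSemidef := by
    refine PosSemidef.mul_mul_conjTranspose_same ?_ U
    refine PosSemidef.diagonal fun i => ?_
    simpa using Complex.zero_le_real.2 (abs_nonneg (hR.eigenvalues i))
  have hWsq : W ^ 2 = Rᴴ * R := by
    rw [hR.eq, pow_two]
    conv_rhs => rw [spec_rep hR]
    rw [hWdef, sandwich_mul U hU, sandwich_mul U hU]
    have habs : (fun i => ((|hR.eigenvalues i| : ℝ) : ℂ) * ((|hR.eigenvalues i| : ℝ) : ℂ))
        = fun i => (hR.eigenvalues i : ℂ) * (hR.eigenvalues i : ℂ) := by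
      funext i
      rw [← Complex.ofReal_mul, abs_mul_abs_self, Complex.ofReal_mul]
    rw [habs]
  have hsqrt := psd_eq_sqrt_of_sq_eq hWpsd (posSemidef_conjTranspose_mul_self R) hWsq
  rw [traceNorm, ← hsqrt, hWdef, trace_sandwich U hU]
  push_cast
  simp

/-- dual bound: `Re Tr(R W) ≤ ‖R‖₁` for Hermitian `R` and unitary-ish `W`. -/
lemma re_trace_mul_le_traceNorm {R : Matrix κ κ ℂ} (hR : R.IsHermitian)
    {W : Matrix κ κ ℂ} (hW : Wᴴ * W = 1) : ((R * W).trace).re ≤ traceNorm R := by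
  set U := Uof hR with hUdef
  have hU : Uᴴ * U = 1 := Uof_star_mul hR
  have hU' : U * Uᴴ = 1 := Uof_mul_star hR
  set V := Uᴴ * W * U with hVdef
  have hVu : Vᴴ * V = 1 := by
    have hcan : ∀ X : Matrix κ κ ℂ, U * (Uᴴ * X) = X := fun X => by
      rw [← Matrix.mul_assoc, hU', Matrix.one_mul]
    have hcanW : ∀ X : Matrix κ κ ℂ, Wᴴ * (W * X) = X := fun X => by
      rw [← Matrix.mul_assoc, hW, Matrix.one_mul]
    rw [hVdef]
    simp only [conjTranspose_mul, conjTranspose_conjTranspose, Matrix.mul_assoc]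
    rw [hcan, hcanW, hU]
  have hVentry : ∀ i, ‖V i i‖ ≤ 1 := by
    intro i
    have h1 : (∑ j, (Complex.normSq (V j i) : ℂ)) = 1 := by
      have := congrFun (congrFun hVu i) i
      simp only [Matrix.mul_apply, conjTranspose_apply, Matrix.one_apply_eq] at this
      rw [← this]
      exact Finset.sum_congr rfl fun j _ => by
        rw [Complex.normSq_eq_conj_mul_self, starRingEnd_apply]
    have h2 : (∑ j, Complex.normSq (V j i)) = 1 := by exact_mod_cast h1
    have h3 : Complex.normSq (V i i) ≤ 1 := by
      rw [← h2]
      exact Finset.single_le_sum (f := fun j => Complex.normSq (V j i))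
        (fun j _ => Complex.normSq_nonneg _) (Finset.mem_univ i)
    rw [Complex.norm_def]
    exact Real.sqrt_le_one.mpr h3
  have htr : (R * W).trace = ∑ i, (hR.eigenvalues i : ℂ) * V i i := by
    conv_lhs => rw [spec_rep hR]
    calc (U * diagonal (fun i => (hR.eigenvalues i : ℂ)) * Uᴴ * W).trace
        = (U * (diagonal (fun i => (hR.eigenvalues i : ℂ)) * (Uᴴ * W))).trace := by
          simp only [Matrix.mul_assoc]
      _ = ((diagonal (fun i => (hR.eigenvalues i : ℂ)) * (Uᴴ * W)) * U).trace :=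
          trace_mul_comm _ _
      _ = (diagonal (fun i => (hR.eigenvalues i : ℂ)) * V).trace := by
          rw [hVdef]; simp only [Matrix.mul_assoc]
      _ = ∑ i, (hR.eigenvalues i : ℂ) * V i i := trace_diagonal_mul _ _
  rw [htr, traceNorm_eq_sum_abs hR]
  rw [Complex.re_sum]
  refine Finset.sum_le_sum fun i _ => ?_
  rw [Complex.re_ofReal_mul]
  calc hR.eigenvalues i * (V i i).re ≤ |hR.eigenvalues i * (V i i).re| := le_abs_self _
    _ = |hR.eigenvalues i| * |(V i i).re| := abs_mul _ _
    _ ≤ |hR.eigenvalues i| * 1 := by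
        refine mul_le_mul_of_nonneg_left ?_ (abs_nonneg _)
        calc |(V i i).re| ≤ ‖V i i‖ := Complex.abs_re_le_norm _
          _ ≤ 1 := hVentry i
    _ = |hR.eigenvalues i| := mul_one _


/-- sign unitary attached to a Hermitian matrix -/
noncomputable def sgnM {R : Matrix κ κ ℂ} (hR : R.IsHermitian) : Matrix κ κ ℂ :=
  Uof hR * diagonal (fun i => if hR.eigenvalues i < 0 then (-1 : ℂ) else 1) * (Uof hR)ᴴ

lemma sgnM_conjTranspose {R : Matrix κ κ ℂ} (hR : R.IsHermitian) : (sgnM hR)ᴴ = sgnM hR := by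
  rw [sgnM, conjTranspose_mul, conjTranspose_mul, conjTranspose_conjTranspose,
    diagonal_conjTranspose]
  have : (star fun i => if hR.eigenvalues i < 0 then (-1 : ℂ) else 1)
      = fun i => if hR.eigenvalues i < 0 then (-1 : ℂ) else 1 := by
    funext i
    by_cases h : hR.eigenvalues i < 0 <;> simp [h]
  rw [this, Matrix.mul_assoc]

lemma sgnM_unitary {R : Matrix κ κ ℂ} (hR : R.IsHermitian) : (sgnM hR)ᴴ * sgnM hR = 1 := by
  rw [sgnM_conjTranspose, sgnM, sandwich_mul _ (Uof_star_mul hR)]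
  have : (fun i => (if hR.eigenvalues i < 0 then (-1 : ℂ) else 1)
      * (if hR.eigenvalues i < 0 then (-1 : ℂ) else 1)) = fun _ => (1 : ℂ) := by
    funext i
    by_cases h : hR.eigenvalues i < 0 <;> simp [h]
  rw [this, diagonal_one, Matrix.mul_one, Uof_mul_star hR]

lemma mul_sgnM {R : Matrix κ κ ℂ} (hR : R.IsHermitian) :
    R * sgnM hR = Uof hR * diagonal (fun i => ((|hR.eigenvalues i| : ℝ) : ℂ)) * (Uof hR)ᴴ := by
  have h0 : R * sgnM hR
      = (Uof hR * diagonal (fun i => (hR.eigenvalues i : ℂ)) * (Uof hR)ᴴ) * sgnM hR := by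
    rw [← spec_rep hR]
  rw [h0, sgnM, sandwich_mul _ (Uof_star_mul hR)]
  have hfun : (fun i => (hR.eigenvalues i : ℂ) * (if hR.eigenvalues i < 0 then (-1:ℂ) else 1))
      = fun i => ((|hR.eigenvalues i| : ℝ) : ℂ) := by
    funext i
    by_cases h : hR.eigenvalues i < 0
    · simp [h, abs_of_neg h]
    · simp [h, abs_of_nonneg (not_lt.mp h)]
  rw [hfun]

lemma sgnM_mul {R : Matrix κ κ ℂ} (hR : R.IsHermitian) :
    sgnM hR * R = Uof hR * diagonal (fun i => ((|hR.eigenvalues i| : ℝ) : ℂ)) * (Uof hR)ᴴ := by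
  have h0 : sgnM hR * R
      = sgnM hR * (Uof hR * diagonal (fun i => (hR.eigenvalues i : ℂ)) * (Uof hR)ᴴ) := by
    rw [← spec_rep hR]
  rw [h0, sgnM, sandwich_mul _ (Uof_star_mul hR)]
  have hfun : (fun i => (if hR.eigenvalues i < 0 then (-1:ℂ) else 1) * (hR.eigenvalues i : ℂ))
      = fun i => ((|hR.eigenvalues i| : ℝ) : ℂ) := by
    funext i
    by_cases h : hR.eigenvalues i < 0
    · simp [h, abs_of_neg h]
    · simp [h, abs_of_nonneg (not_lt.mp h)]
  rw [hfun]

lemma re_trace_mul_sgnM {R : Matrix κ κ ℂ} (hR : R.IsHermitian) :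
    ((R * sgnM hR).trace).re = traceNorm R := by
  rw [mul_sgnM hR, trace_sandwich _ (Uof_star_mul hR), traceNorm_eq_sum_abs hR]
  push_cast
  simp

/-- triangle inequality for sums of Hermitian matrices -/
lemma traceNorm_sum_le {β : Type*} (s : Finset β) (R : β → Matrix κ κ ℂ)
    (h : ∀ b ∈ s, (R b).IsHermitian) :
    traceNorm (∑ b ∈ s, R b) ≤ ∑ b ∈ s, traceNorm (R b) := by
  have hsum : (∑ b ∈ s, R b).IsHermitian := by
    unfold Matrix.IsHermitian
    rw [conjTranspose_sum]
    exact Finset.sum_congr rfl h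
  rw [← re_trace_mul_sgnM hsum, Finset.sum_mul, trace_sum, Complex.re_sum]
  exact Finset.sum_le_sum fun b hb => re_trace_mul_le_traceNorm (h b hb) (sgnM_unitary hsum)

lemma traceNorm_zero : traceNorm (0 : Matrix κ κ ℂ) = 0 := by
  have h0 : (0 : Matrix κ κ ℂ).PosSemidef := PosSemidef.zero
  have : (0 : Matrix κ κ ℂ) = CFC.sqrt ((0 : Matrix κ κ ℂ)ᴴ * 0) :=
    psd_eq_sqrt_of_sq_eq h0 (posSemidef_conjTranspose_mul_self (0 : Matrix κ κ ℂ)) (by simp)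
  rw [traceNorm, ← this, trace_zero, Complex.zero_re]

/-- diagonal entries of PSD matrices have nonneg real part -/
lemma re_diag_nonneg {M : Matrix κ κ ℂ} (hM : M.PosSemidef) (i : κ) :
    0 ≤ (M i i).re := by
  have h := hM.re_dotProduct_nonneg (Pi.single i 1)
  have hd : dotProduct (star ((Pi.single i 1 : κ → ℂ))) (M *ᵥ (Pi.single i 1 : κ → ℂ))
      = M i i := by
    have hs : star ((Pi.single i 1 : κ → ℂ)) = (Pi.single i 1 : κ → ℂ) := by
      funext j; by_cases hij : j = i <;> simp [Pi.single_apply, hij]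
    rw [hs, single_dotProduct, one_mul, mulVec_single]
    exact mul_one _
  rw [hd] at h
  exact h

/-- `Tr(X · U diag d Uᴴ) = ∑ d i (Uᴴ X U)_{ii}` -/
lemma trace_mul_conj_diag (U : Matrix κ κ ℂ) (hU : Uᴴ * U = 1) (d : κ → ℂ)
    (X : Matrix κ κ ℂ) :
    (X * (U * diagonal d * Uᴴ)).trace = ∑ i, d i * ((Uᴴ * X * U) i i) := by
  have h1 : X * (U * diagonal d * Uᴴ) = (X * U) * diagonal d * Uᴴ := by
    simp only [Matrix.mul_assoc]
  rw [h1, trace_mul_cycle, ← Matrix.mul_assoc, trace_mul_comm, trace_diagonal_mul]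

/-- Powers–Størmer inequality -/
lemma powers_stormer {P Q : Matrix κ κ ℂ} (hP : P.PosSemidef) (hQ : Q.PosSemidef) :
    (((P - Q) * (P - Q)).trace).re ≤ traceNorm (P * P - Q * Q) := by
  have hΔ : (P - Q).IsHermitian := hP.1.sub hQ.1
  obtain ⟨U, e, W, hU, hU', hspec, hWu, hΔW, hWΔ⟩ :
      ∃ (U : Matrix κ κ ℂ) (e : κ → ℝ) (W : Matrix κ κ ℂ),
        Uᴴ * U = 1 ∧ U * Uᴴ = 1 ∧
        P - Q = U * diagonal (fun i => (e i : ℂ)) * Uᴴ ∧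
        Wᴴ * W = 1 ∧
        (P - Q) * W = U * diagonal (fun i => ((|e i| : ℝ) : ℂ)) * Uᴴ ∧
        W * (P - Q) = U * diagonal (fun i => ((|e i| : ℝ) : ℂ)) * Uᴴ :=
    ⟨Uof hΔ, hΔ.eigenvalues, sgnM hΔ, Uof_star_mul hΔ, Uof_mul_star hΔ, spec_rep hΔ,
      sgnM_unitary hΔ, mul_sgnM hΔ, sgnM_mul hΔ⟩
  have hPQH : (P * P - Q * Q).IsHermitian := by
    unfold Matrix.IsHermitian
    rw [conjTranspose_sub, conjTranspose_mul, conjTranspose_mul, hP.1.eq, hQ.1.eq]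
  have hiden : (P + Q) * (P - Q) + (P - Q) * (P + Q)
      = (P * P - Q * Q) + (P * P - Q * Q) := by noncomm_ring
  -- key trace identity
  have htr1 : ((P * P - Q * Q) * W).trace + ((P * P - Q * Q) * W).trace
      = ((P + Q) * ((P - Q) * W)).trace + ((P + Q) * ((P - Q) * W)).trace := by
    have t2 : ((P - Q) * ((P + Q) * W)).trace = ((P + Q) * (W * (P - Q))).trace := by
      rw [trace_mul_comm, Matrix.mul_assoc]
    calc ((P * P - Q * Q) * W).trace + ((P * P - Q * Q) * W).trace
        = (((P * P - Q * Q) + (P * P - Q * Q)) * W).trace := by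
          rw [Matrix.add_mul, trace_add]
      _ = (((P + Q) * (P - Q) + (P - Q) * (P + Q)) * W).trace := by rw [hiden]
      _ = ((P + Q) * ((P - Q) * W)).trace + ((P - Q) * ((P + Q) * W)).trace := by
          rw [Matrix.add_mul, trace_add, Matrix.mul_assoc, Matrix.mul_assoc]
      _ = ((P + Q) * ((P - Q) * W)).trace + ((P + Q) * ((P - Q) * W)).trace := by
          rw [t2, hWΔ, hΔW]
  -- diagonal entries bound
  have hDe : Uᴴ * (P - Q) * U = diagonal (fun i => (e i : ℂ)) := by
    calc Uᴴ * (P - Q) * U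
        = Uᴴ * (U * diagonal (fun i => (e i : ℂ)) * Uᴴ) * U := by rw [← hspec]
      _ = (Uᴴ * U) * diagonal (fun i => (e i : ℂ)) * (Uᴴ * U) := by
          simp only [Matrix.mul_assoc]
      _ = diagonal (fun i => (e i : ℂ)) := by rw [hU, Matrix.one_mul, Matrix.mul_one]
  have hdiag : ∀ i, |e i| ≤ ((Uᴴ * (P + Q) * U) i i).re := by
    intro i
    have hplus : (Uᴴ * (P + Q) * U + Uᴴ * (P - Q) * U).PosSemidef := by
      have h2 : Uᴴ * (P + Q) * U + Uᴴ * (P - Q) * U = Uᴴ * (P + P) * U := by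
        rw [← Matrix.add_mul, ← Matrix.mul_add]
        congr 2
        abel
      rw [h2]
      exact (hP.add hP).conjTranspose_mul_mul_same U
    have hminus : (Uᴴ * (P + Q) * U - Uᴴ * (P - Q) * U).PosSemidef := by
      have h2 : Uᴴ * (P + Q) * U - Uᴴ * (P - Q) * U = Uᴴ * (Q + Q) * U := by
        rw [← Matrix.sub_mul, ← Matrix.mul_sub]
        congr 2
        abel
      rw [h2]
      exact (hQ.add hQ).conjTranspose_mul_mul_same U
    have h1 := re_diag_nonneg hplus i
    have h2 := re_diag_nonneg hminus i
    rw [hDe] at h1 h2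
    simp only [Matrix.add_apply, Matrix.sub_apply, diagonal_apply_eq, Complex.add_re,
      Complex.sub_re, Complex.ofReal_re] at h1 h2
    rw [abs_le]
    constructor <;> linarith
  -- lower bound for the trace of (P+Q)|Δ|
  have hge : (((P - Q) * (P - Q)).trace).re ≤ (((P + Q) * ((P - Q) * W)).trace).re := by
    have hΔΔ : ((P - Q) * (P - Q)).trace = ∑ i, ((e i : ℂ) * (e i : ℂ)) := by
      conv_lhs => rw [hspec]
      rw [sandwich_mul _ hU, trace_sandwich _ hU]
    have htrΔΔ : (((P - Q) * (P - Q)).trace).re = ∑ i, e i ^ 2 := by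
      rw [hΔΔ, Complex.re_sum]
      exact Finset.sum_congr rfl fun i _ => by
        rw [← Complex.ofReal_mul, Complex.ofReal_re, sq]
    have htrabs : ((((P + Q) * ((P - Q) * W))).trace).re
        = ∑ i, |e i| * ((Uᴴ * (P + Q) * U) i i).re := by
      rw [hΔW, trace_mul_conj_diag U hU, Complex.re_sum]
      exact Finset.sum_congr rfl fun i _ => by rw [Complex.re_ofReal_mul]
    rw [htrΔΔ, htrabs]
    refine Finset.sum_le_sum fun i _ => ?_
    have := hdiag i
    nlinarith [abs_nonneg (e i), sq_abs (e i)]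
  -- conclude
  have hfin : (((P * P - Q * Q) * W).trace).re ≤ traceNorm (P * P - Q * Q) :=
    re_trace_mul_le_traceNorm hPQH hWu
  have htr1re := congrArg Complex.re htr1
  simp only [Complex.add_re] at htr1re
  linarith

variable {ι : Type*} [Fintype ι] [DecidableEq ι] {n : ℕ}

/-- block matrix built from an `ι × ι` family of `n × n` matrices -/
def blockM (Φ : ι → ι → Matrix (Fin n) (Fin n) ℂ) : Matrix (ι × Fin n) (ι × Fin n) ℂ :=
  fun p q => Φ p.1 q.1 p.2 q.2

lemma blockM_mul (Φ Ψ : ι → ι → Matrix (Fin n) (Fin n) ℂ) :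
    blockM Φ * blockM Ψ = blockM (fun x y => ∑ z, Φ x z * Ψ z y) := by
  ext ⟨x, i⟩ ⟨y, j⟩
  simp only [blockM, Matrix.mul_apply, Fintype.sum_prod_type, Matrix.sum_apply]

lemma blockM_trace (Φ : ι → ι → Matrix (Fin n) (Fin n) ℂ) :
    (blockM Φ).trace = ∑ x, (Φ x x).trace := by
  simp only [Matrix.trace, Matrix.diag, blockM, Fintype.sum_prod_type]

lemma blockM_conjTranspose (Φ : ι → ι → Matrix (Fin n) (Fin n) ℂ) :
    (blockM Φ)ᴴ = blockM (fun x y => (Φ y x)ᴴ) := by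
  ext ⟨x, i⟩ ⟨y, j⟩
  simp [blockM, conjTranspose_apply]

lemma blockM_sub (Φ Ψ : ι → ι → Matrix (Fin n) (Fin n) ℂ) :
    blockM Φ - blockM Ψ = blockM (fun x y => Φ x y - Ψ x y) := by
  ext ⟨x, i⟩ ⟨y, j⟩
  simp [blockM]

lemma blockM_add (Φ Ψ : ι → ι → Matrix (Fin n) (Fin n) ℂ) :
    blockM Φ + blockM Ψ = blockM (fun x y => Φ x y + Ψ x y) := by
  ext ⟨x, i⟩ ⟨y, j⟩
  simp [blockM]

lemma blockM_smul (c : ℂ) (Φ : ι → ι → Matrix (Fin n) (Fin n) ℂ) :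
    c • blockM Φ = blockM (fun x y => c • Φ x y) := by
  ext ⟨x, i⟩ ⟨y, j⟩
  simp [blockM]

lemma blockM_sum {β : Type*} (s : Finset β) (Φ : β → ι → ι → Matrix (Fin n) (Fin n) ℂ) :
    ∑ b ∈ s, blockM (Φ b) = blockM (fun x y => ∑ b ∈ s, Φ b x y) := by
  ext ⟨x, i⟩ ⟨y, j⟩
  simp [blockM, Matrix.sum_apply]

/-- Gram-type block matrices are PSD. -/
lemma blockM_gram_posSemidef [Inhabited ι] (Y : ι → Matrix (Fin n) (Fin n) ℂ) :
    (blockM (fun x y => (Y x)ᴴ * Y y)).PosSemidef := by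
  set L := blockM (fun (z : ι) (y : ι) => if z = default then Y y else 0) with hLdef
  have h : Lᴴ * L = blockM (fun x y => (Y x)ᴴ * Y y) := by
    rw [hLdef, blockM_conjTranspose, blockM_mul]
    refine congrArg blockM (funext fun x => funext fun y => ?_)
    have hz' : ∀ z : ι, (if z = default then Y x else 0)ᴴ * (if z = default then Y y else 0)
        = if z = default then (Y x)ᴴ * Y y else 0 := by
      intro z
      by_cases hz : z = default <;> simp [hz]
    simp only [hz']
    simp
  rw [← h]
  exact posSemidef_conjTranspose_mul_self L

/-- single diagonal block embedding is PSD -/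
lemma blockM_single_diag_posSemidef (x : ι) {X : Matrix (Fin n) (Fin n) ℂ}
    (hX : X.PosSemidef) :
    (blockM (fun a b => if a = x ∧ b = x then X else 0)).PosSemidef := by
  set C := CFC.sqrt X with hCdef
  have hCH : Cᴴ = C := (psd_sqrt_psd hX).1
  set L := blockM (fun (a b : ι) => if a = x ∧ b = x then C else 0) with hLdef
  have h : Lᴴ * L = blockM (fun a b => if a = x ∧ b = x then X else 0) := by
    rw [hLdef, blockM_conjTranspose, blockM_mul]
    refine congrArg blockM (funext fun a => funext fun b => ?_)
    have : ∀ z : ι, (if z = x ∧ a = x then C else 0)ᴴ * (if z = x ∧ b = x then C else 0)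
        = if z = x ∧ (a = x ∧ b = x) then Cᴴ * C else 0 := by
      intro z
      by_cases hz : z = x
      · by_cases ha : a = x <;> by_cases hb : b = x <;> simp [hz, ha, hb]
      · simp [hz]
    refine (Finset.sum_congr rfl fun z _ => this z).trans ?_
    simp only [ite_and]
    rw [Finset.sum_ite_eq' Finset.univ x]
    by_cases ha : a = x <;> by_cases hb : b = x <;>
      simp [ha, hb, hCH, hCdef, (psd_sqrt_psd hX).1.eq, psd_sqrt_mul_self hX]
  rw [← h]
  exact posSemidef_conjTranspose_mul_self L

/-- trace norm of a Hermitian "cross" two-block matrix -/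
lemma traceNorm_cross {x y : ι} (hxy : x ≠ y) (B : Matrix (Fin n) (Fin n) ℂ) :
    traceNorm (blockM (fun a b =>
        (if a = x ∧ b = y then B else 0) + (if a = y ∧ b = x then Bᴴ else 0)))
      = traceNorm B + traceNorm Bᴴ := by
  set Cr := blockM (fun a b =>
      (if a = x ∧ b = y then B else 0) + (if a = y ∧ b = x then Bᴴ else 0)) with hCrdef
  have hBB : (B * Bᴴ).PosSemidef := by
    have := posSemidef_conjTranspose_mul_self Bᴴ
    simpa using this
  have hBB' : (Bᴴ * B).PosSemidef := posSemidef_conjTranspose_mul_self B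
  -- compute Crᴴ * Cr
  have hCr2 : Crᴴ * Cr = blockM (fun a b =>
      (if a = x ∧ b = x then B * Bᴴ else 0) + (if a = y ∧ b = y then Bᴴ * B else 0)) := by
    rw [hCrdef, blockM_conjTranspose, blockM_mul]
    refine congrArg blockM (funext fun a => funext fun b => ?_)
    have hterm : ∀ z : ι,
        ((if z = x ∧ a = y then B else 0) + (if z = y ∧ a = x then Bᴴ else 0))ᴴ
          * ((if z = x ∧ b = y then B else 0) + (if z = y ∧ b = x then Bᴴ else 0))
        = (if z = x ∧ (a = y ∧ b = y) then Bᴴ * B else 0)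
          + (if z = y ∧ (a = x ∧ b = x) then B * Bᴴ else 0) := by
      intro z
      by_cases hz1 : z = x
      · have hz2 : ¬ z = y := by rw [hz1]; exact hxy
        by_cases ha : a = y <;> by_cases hb : b = y <;>
          simp [hz1, hz2, ha, hb, hxy, Ne.symm hxy, conjTranspose_add,
            apply_ite (conjTranspose), Matrix.add_mul, Matrix.mul_add]
      · by_cases hz2 : z = y
        · by_cases ha : a = x <;> by_cases hb : b = x <;>
            simp [hz1, hz2, ha, hb, hxy, Ne.symm hxy, conjTranspose_add,
              apply_ite (conjTranspose), Matrix.add_mul, Matrix.mul_add]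
        · simp [hz1, hz2]
    refine (Finset.sum_congr rfl fun z _ => hterm z).trans ?_
    rw [Finset.sum_add_distrib]
    simp only [ite_and]
    rw [Finset.sum_ite_eq' Finset.univ x, Finset.sum_ite_eq' Finset.univ y]
    simp only [Finset.mem_univ, if_true]
    by_cases ha : a = x
    · have ha2 : ¬ a = y := by rw [ha]; exact hxy
      by_cases hb : b = x <;> by_cases hb2 : b = y <;> simp_all
    · by_cases ha2 : a = y <;> by_cases hb : b = x <;> by_cases hb2 : b = y <;> simp_all
  -- the square root of Crᴴ * Cr
  set W := blockM (fun a b => (if a = x ∧ b = x then CFC.sqrt (B * Bᴴ) else 0)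
      + (if a = y ∧ b = y then CFC.sqrt (Bᴴ * B) else 0)) with hWdef
  have hWpsd : W.PosSemidef := by
    rw [hWdef, ← blockM_add]
    exact (blockM_single_diag_posSemidef x (psd_sqrt_psd hBB)).add
      (blockM_single_diag_posSemidef y (psd_sqrt_psd hBB'))
  have hWsq : W ^ 2 = Crᴴ * Cr := by
    rw [pow_two, hWdef, blockM_mul, hCr2]
    refine congrArg blockM (funext fun a => funext fun b => ?_)
    have hterm2 : ∀ z : ι,
        ((if a = x ∧ z = x then CFC.sqrt (B * Bᴴ) else 0) + (if a = y ∧ z = y then CFC.sqrt (Bᴴ * B) else 0))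
          * ((if z = x ∧ b = x then CFC.sqrt (B * Bᴴ) else 0) + (if z = y ∧ b = y then CFC.sqrt (Bᴴ * B) else 0))
        = (if z = x ∧ (a = x ∧ b = x) then B * Bᴴ else 0)
          + (if z = y ∧ (a = y ∧ b = y) then Bᴴ * B else 0) := by
      intro z
      by_cases hz1 : z = x
      · have hz2 : ¬ z = y := by rw [hz1]; exact hxy
        by_cases ha : a = x <;> by_cases hb : b = x <;>
          simp [hz1, hz2, ha, hb, hxy, Ne.symm hxy, Matrix.add_mul, Matrix.mul_add,
            psd_sqrt_mul_self hBB]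
      · by_cases hz2 : z = y
        · by_cases ha : a = y <;> by_cases hb : b = y <;>
            simp [hz1, hz2, ha, hb, hxy, Ne.symm hxy, Matrix.add_mul, Matrix.mul_add,
              psd_sqrt_mul_self hBB']
        · simp [hz1, hz2]
    refine (Finset.sum_congr rfl fun z _ => hterm2 z).trans ?_
    rw [Finset.sum_add_distrib]
    simp only [ite_and]
    rw [Finset.sum_ite_eq' Finset.univ x, Finset.sum_ite_eq' Finset.univ y]
    simp only [Finset.mem_univ, if_true]
  have hsqrt := psd_eq_sqrt_of_sq_eq hWpsd (posSemidef_conjTranspose_mul_self Cr) hWsq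
  rw [traceNorm, ← hsqrt, hWdef, blockM_trace]
  have htr : ∀ a : ι, ((if a = x ∧ a = x then CFC.sqrt (B * Bᴴ) else 0)
      + (if a = y ∧ a = y then CFC.sqrt (Bᴴ * B) else 0)).trace
      = (if a = x then (CFC.sqrt (B * Bᴴ)).trace else 0) + (if a = y then (CFC.sqrt (Bᴴ * B)).trace else 0) := by
    intro a
    by_cases ha : a = x <;> by_cases ha2 : a = y <;>
      simp [ha, ha2, trace_add, apply_ite Matrix.trace]
  rw [Finset.sum_congr rfl fun a _ => htr a, Finset.sum_add_distrib,
    Finset.sum_ite_eq' Finset.univ x, Finset.sum_ite_eq' Finset.univ y]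
  simp only [Finset.mem_univ, if_true, Complex.add_re]
  rw [traceNorm_eq_trace_sqrt hBB' rfl, traceNorm_eq_trace_sqrt hBB (by simp)]
  ring

/-- per-bipartition inequality: `4 Σ d·T ≤ 2 Σ d·F` -/
lemma key_eps {ι : Type*} [Fintype ι] [DecidableEq ι] [Inhabited ι] {n : ℕ}
    (A : ι → Matrix (Fin n) (Fin n) ℂ) (M rootM : Matrix (Fin n) (Fin n) ℂ)
    (hA_herm : ∀ x, (A x)ᴴ = A x)
    (hrootM_herm : rootMᴴ = rootM)
    (hrootM2 : rootM * rootM = M)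
    (hMSM : M * (∑ z, A z * A z) * M = 1)
    (ε : ι → Bool) :
    4 * (∑ x, ∑ y, (if ε x = ε y then (0:ℝ) else 1)
        * ((M * (A x * A x) * M * (A y * A y)).trace).re)
      ≤ ∑ x, ∑ y, (if ε x = ε y then (0:ℝ) else 1)
        * (traceNorm (A x * A y) + traceNorm (A y * A x)) := by
  classical
  set S : Matrix (Fin n) (Fin n) ℂ := ∑ z, A z * A z with hSdef
  set εc : ι → ℂ := fun x => if ε x then 1 else -1 with hεcdef
  have hεc2 : ∀ x, εc x * εc x = 1 := by
    intro x; by_cases h : ε x <;> simp [hεcdef, h]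
  have hεcstar : ∀ x, star (εc x) = εc x := by
    intro x; by_cases h : ε x <;> simp [hεcdef, h]
  set Θ : ι → ι → Matrix (Fin n) (Fin n) ℂ := fun x y => A x * M * A y with hΘdef
  have hYY : ∀ x y, (rootM * A x)ᴴ * (rootM * A y) = Θ x y := by
    intro x y
    rw [conjTranspose_mul, hrootM_herm, hA_herm]
    show (A x * rootM) * (rootM * A y) = A x * M * A y
    calc (A x * rootM) * (rootM * A y) = A x * ((rootM * rootM) * A y) := by
          simp only [Matrix.mul_assoc]
      _ = A x * M * A y := by rw [hrootM2, Matrix.mul_assoc]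
  set Hb := blockM (fun x y => Θ x y) with hHbdef
  set Qb := blockM (fun x y => (εc x * εc y) • Θ x y) with hQbdef
  have hHbpsd : Hb.PosSemidef := by
    have h := blockM_gram_posSemidef (fun x => rootM * A x)
    have he : (fun x y => (rootM * A x)ᴴ * (rootM * A y)) = fun x y => Θ x y :=
      funext fun x => funext fun y => hYY x y
    rwa [he] at h
  have hQbpsd : Qb.PosSemidef := by
    have h := blockM_gram_posSemidef (fun x => εc x • (rootM * A x))
    have he : (fun x y => (εc x • (rootM * A x))ᴴ * (εc y • (rootM * A y)))
        = fun x y => (εc x * εc y) • Θ x y := by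
      funext x y
      rw [conjTranspose_smul, hεcstar, smul_mul_assoc, mul_smul_comm, smul_smul, hYY]
    rwa [he] at h
  have hsumz : ∀ x y, (∑ z, Θ x z * Θ z y) = A x * A y := by
    intro x y
    have h1 : ∀ z : ι, Θ x z * Θ z y = (A x * M) * ((A z * A z) * (M * A y)) := by
      intro z; rw [hΘdef]; simp only [Matrix.mul_assoc]
    calc (∑ z, Θ x z * Θ z y) = ∑ z, (A x * M) * ((A z * A z) * (M * A y)) :=
          Finset.sum_congr rfl fun z _ => h1 z
      _ = (A x * M) * ((∑ z, A z * A z) * (M * A y)) := by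
          rw [← Finset.mul_sum, ← Finset.sum_mul]
      _ = A x * (M * S * M * A y) := by rw [← hSdef]; simp only [Matrix.mul_assoc]
      _ = A x * A y := by rw [hMSM, Matrix.one_mul]
  have hHbHb : Hb * Hb = blockM (fun x y => A x * A y) := by
    rw [hHbdef, blockM_mul]
    exact congrArg blockM (funext fun x => funext fun y => hsumz x y)
  have hQbQb : Qb * Qb = blockM (fun x y => (εc x * εc y) • (A x * A y)) := by
    rw [hQbdef, blockM_mul]
    refine congrArg blockM (funext fun x => funext fun y => ?_)
    have h1 : ∀ z : ι, ((εc x * εc z) • Θ x z) * ((εc z * εc y) • Θ z y)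
        = (εc x * εc y) • (Θ x z * Θ z y) := by
      intro z
      rw [smul_mul_assoc, mul_smul_comm, smul_smul]
      congr 1
      calc (εc x * εc z) * (εc z * εc y) = (εc x * εc y) * (εc z * εc z) := by ring
        _ = εc x * εc y := by rw [hεc2 z, mul_one]
    calc (∑ z, ((εc x * εc z) • Θ x z) * ((εc z * εc y) • Θ z y))
        = ∑ z, (εc x * εc y) • (Θ x z * Θ z y) := Finset.sum_congr rfl fun z _ => h1 z
      _ = (εc x * εc y) • (∑ z, Θ x z * Θ z y) := by rw [Finset.smul_sum]
      _ = (εc x * εc y) • (A x * A y) := by rw [hsumz]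
  -- traces
  have hΘΘtr : ∀ x z, (Θ x z * Θ z x).trace
      = (M * (A z * A z) * M * (A x * A x)).trace := by
    intro x z
    rw [hΘdef]
    calc ((A x * M * A z) * (A z * M * A x)).trace
        = (A x * (M * A z * (A z * M * A x))).trace := by simp only [Matrix.mul_assoc]
      _ = ((M * A z * (A z * M * A x)) * A x).trace := trace_mul_comm _ _
      _ = (M * (A z * A z) * M * (A x * A x)).trace := by simp only [Matrix.mul_assoc]
  have htHQ : (Hb * Qb).trace
      = ∑ x, ∑ z, (εc z * εc x) * ((M * (A z * A z) * M * (A x * A x)).trace) := by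
    rw [hHbdef, hQbdef, blockM_mul, blockM_trace]
    refine Finset.sum_congr rfl fun x _ => ?_
    rw [trace_sum]
    refine Finset.sum_congr rfl fun z _ => ?_
    rw [mul_smul_comm, trace_smul, smul_eq_mul, hΘΘtr]
  have htQH : (Qb * Hb).trace = (Hb * Qb).trace := trace_mul_comm _ _
  have htHH : (Hb * Hb).trace = ∑ x, (A x * A x).trace := by
    rw [hHbHb, blockM_trace]
  have htQQ : (Qb * Qb).trace = ∑ x, (A x * A x).trace := by
    rw [hQbQb, blockM_trace]
    refine Finset.sum_congr rfl fun x _ => ?_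
    rw [hεc2, one_smul]
  have hTrow : ∀ x, (∑ y, (M * (A x * A x) * M * (A y * A y)).trace)
      = (A x * A x).trace := by
    intro x
    have h0 : (∑ y, (M * (A x * A x) * M * (A y * A y)).trace)
        = (M * (A x * A x) * M * S).trace := by
      rw [← trace_sum]
      congr 1
      rw [← Finset.mul_sum]
    rw [h0]
    have h1 : M * (A x * A x) * M * S = (M * (A x * A x)) * (M * S) := by
      simp only [Matrix.mul_assoc]
    have h2 : (M * S) * (M * (A x * A x)) = (M * S * M) * (A x * A x) := by
      simp only [Matrix.mul_assoc]
    rw [h1, trace_mul_comm, h2, hMSM, Matrix.one_mul]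
  -- Powers–Størmer
  have hPS := powers_stormer hHbpsd hQbpsd
  -- LHS of PS in terms of T
  have htr1 : ((Hb - Qb) * (Hb - Qb)).trace
      = (Hb * Hb).trace + (Qb * Qb).trace - (Hb * Qb).trace - (Hb * Qb).trace := by
    rw [Matrix.sub_mul, Matrix.mul_sub, Matrix.mul_sub, trace_sub, trace_sub, trace_sub,
      htQH]
    ring
  -- real bookkeeping
  have hterm_re : ∀ (a b : ι) (w : ℂ),
      ((εc a * εc b) * w).re = (1 - 2 * (if ε a = ε b then (0:ℝ) else 1)) * w.re := by
    intro a b w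
    by_cases ha : ε a <;> by_cases hb : ε b <;>
      simp [hεcdef, ha, hb, Complex.neg_re] <;> ring
  have hHQre : ((Hb * Qb).trace).re
      = ∑ a, ∑ b, (1 - 2 * (if ε a = ε b then (0:ℝ) else 1))
          * ((M * (A a * A a) * M * (A b * A b)).trace).re := by
    rw [htHQ, Complex.re_sum]
    have h1 : ∀ x : ι, (∑ z, (εc z * εc x) * ((M * (A z * A z) * M * (A x * A x)).trace)).re
        = ∑ z, (1 - 2 * (if ε z = ε x then (0:ℝ) else 1))
            * ((M * (A z * A z) * M * (A x * A x)).trace).re := by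
      intro x
      rw [Complex.re_sum]
      exact Finset.sum_congr rfl fun z _ => hterm_re z x _
    rw [Finset.sum_congr rfl fun x _ => h1 x]
    exact Finset.sum_comm
  have hT_all : (∑ a, ∑ b, ((M * (A a * A a) * M * (A b * A b)).trace).re)
      = ∑ a, ((A a * A a).trace).re := by
    refine Finset.sum_congr rfl fun a _ => ?_
    rw [← Complex.re_sum, hTrow]
  have htr1re : (((Hb - Qb) * (Hb - Qb)).trace).re
      = 4 * ∑ a, ∑ b, (if ε a = ε b then (0:ℝ) else 1)
          * ((M * (A a * A a) * M * (A b * A b)).trace).re := by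
    have h := congrArg Complex.re htr1
    simp only [Complex.sub_re, Complex.add_re] at h
    rw [h, htHH, htQQ, hHQre]
    have hexp : (∑ a, ∑ b, (1 - 2 * (if ε a = ε b then (0:ℝ) else 1))
          * ((M * (A a * A a) * M * (A b * A b)).trace).re)
        = (∑ a, ∑ b, ((M * (A a * A a) * M * (A b * A b)).trace).re)
          - 2 * ∑ a, ∑ b, (if ε a = ε b then (0:ℝ) else 1)
              * ((M * (A a * A a) * M * (A b * A b)).trace).re := by
      rw [Finset.mul_sum, ← Finset.sum_sub_distrib]
      refine Finset.sum_congr rfl fun a _ => ?_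
      rw [Finset.mul_sum, ← Finset.sum_sub_distrib]
      refine Finset.sum_congr rfl fun b _ => ?_
      ring
    rw [hexp, hT_all, Complex.re_sum]
    ring
  -- the Hermitian decomposition of Hb² - Qb²
  have hGsub : Hb * Hb - Qb * Qb
      = blockM (fun x y => ((1:ℂ) - εc x * εc y) • (A x * A y)) := by
    rw [hHbHb, hQbQb, blockM_sub]
    refine congrArg blockM (funext fun x => funext fun y => ?_)
    rw [sub_smul, one_smul]
  have hεcress : ∀ a b : ι, ε a = ε b → εc a * εc b = 1 := by
    intro a b h
    by_cases ha : ε a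
    · have hb : ε b = true := by rw [← h]; exact ha
      simp [hεcdef, ha, hb]
    · have hb : ε b = false := by rw [← h]; simpa using ha
      simp [hεcdef, ha, hb]
  set piece : ι × ι → Matrix (ι × Fin n) (ι × Fin n) ℂ := fun p =>
      (((1:ℂ) - εc p.1 * εc p.2) / 2) • blockM (fun a b =>
        (if a = p.1 ∧ b = p.2 then A p.1 * A p.2 else 0)
        + (if a = p.2 ∧ b = p.1 then A p.2 * A p.1 else 0)) with hpiecedef
  have hps : ∀ p : ι × ι, piece p = blockM (fun a b =>
      (if a = p.1 ∧ b = p.2 then (((1:ℂ) - εc p.1 * εc p.2) / 2) • (A p.1 * A p.2) else 0)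
      + (if a = p.2 ∧ b = p.1 then (((1:ℂ) - εc p.1 * εc p.2) / 2) • (A p.2 * A p.1)
          else 0)) := by
    intro p
    simp only [hpiecedef]
    rw [blockM_smul]
    refine congrArg blockM (funext fun a => funext fun b => ?_)
    rw [smul_add]
    congr 1
    · by_cases h : a = p.1 ∧ b = p.2 <;> simp [h]
    · by_cases h : a = p.2 ∧ b = p.1 <;> simp [h]
  have hdecomp : blockM (fun x y => ((1:ℂ) - εc x * εc y) • (A x * A y))
      = ∑ p : ι × ι, piece p := by
    rw [Finset.sum_congr rfl fun p _ => hps p, blockM_sum]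
    refine congrArg blockM (funext fun a => funext fun b => ?_)
    rw [Finset.sum_add_distrib]
    have hc1 : ∀ p : ι × ι, (a = p.1 ∧ b = p.2) ↔ ((a, b) = p) := by
      intro p; rw [Prod.ext_iff]
    have hc2 : ∀ p : ι × ι, (a = p.2 ∧ b = p.1) ↔ ((b, a) = p) := by
      intro p; rw [Prod.ext_iff]; tauto
    have hs1 : (∑ p : ι × ι, if a = p.1 ∧ b = p.2
          then (((1:ℂ) - εc p.1 * εc p.2) / 2) • (A p.1 * A p.2) else 0)
        = (((1:ℂ) - εc a * εc b) / 2) • (A a * A b) := by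
      simp only [hc1]
      rw [Finset.sum_ite_eq Finset.univ (a, b)
        (fun p => (((1:ℂ) - εc p.1 * εc p.2) / 2) • (A p.1 * A p.2))]
      simp
    have hs2 : (∑ p : ι × ι, if a = p.2 ∧ b = p.1
          then (((1:ℂ) - εc p.1 * εc p.2) / 2) • (A p.2 * A p.1) else 0)
        = (((1:ℂ) - εc b * εc a) / 2) • (A a * A b) := by
      simp only [hc2]
      rw [Finset.sum_ite_eq Finset.univ (b, a)
        (fun p => (((1:ℂ) - εc p.1 * εc p.2) / 2) • (A p.2 * A p.1))]
      simp
    rw [hs1, hs2, ← add_smul]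
    congr 1
    ring
  have hcross_herm : ∀ x y : ι, (blockM (fun a b =>
      (if a = x ∧ b = y then A x * A y else 0)
      + (if a = y ∧ b = x then A y * A x else 0))).IsHermitian := by
    intro x y
    show _ᴴ = _
    rw [blockM_conjTranspose]
    refine congrArg blockM (funext fun a => funext fun b => ?_)
    simp only [conjTranspose_add, apply_ite (conjTranspose), conjTranspose_zero,
      conjTranspose_mul, hA_herm]
    rw [add_comm]
    congr 1
    · exact if_congr (by tauto) rfl rfl
    · exact if_congr (by tauto) rfl rfl
  have hherm : ∀ p : ι × ι, (piece p).IsHermitian := by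
    intro p
    by_cases hp : ε p.1 = ε p.2
    · have h0 : piece p = 0 := by
        simp only [hpiecedef]
        have hc0 : ((1:ℂ) - εc p.1 * εc p.2) / 2 = 0 := by
          rw [hεcress p.1 p.2 hp]; norm_num
        rw [hc0, zero_smul]
      rw [h0]
      show _ᴴ = _
      exact conjTranspose_zero
    · have hc : ((1:ℂ) - εc p.1 * εc p.2) / 2 = 1 := by
        have h1 : εc p.1 * εc p.2 = -1 := by
          by_cases ha : ε p.1
          · have hb : ε p.2 = false := by
              cases hbv : ε p.2
              · rfl
              · exact absurd (by rw [hbv, ha]) hp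
            simp [hεcdef, ha, hb]
          · have hb : ε p.2 = true := by
              cases hbv : ε p.2
              · exact absurd (by rw [hbv]; simpa using ha) hp
              · rfl
            simp [hεcdef, ha, hb]
        rw [h1]; norm_num
      show _ᴴ = _
      simp only [hpiecedef]
      rw [hc, one_smul]
      exact hcross_herm p.1 p.2
  have hpiece_norm : ∀ p : ι × ι, traceNorm (piece p)
      = (if ε p.1 = ε p.2 then (0:ℝ) else 1)
        * (traceNorm (A p.1 * A p.2) + traceNorm (A p.2 * A p.1)) := by
    intro p
    by_cases hp : ε p.1 = ε p.2
    · have h0 : piece p = 0 := by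
        simp only [hpiecedef]
        have hc0 : ((1:ℂ) - εc p.1 * εc p.2) / 2 = 0 := by
          rw [hεcress p.1 p.2 hp]; norm_num
        rw [hc0, zero_smul]
      rw [h0, traceNorm_zero, if_pos hp, zero_mul]
    · have hc : ((1:ℂ) - εc p.1 * εc p.2) / 2 = 1 := by
        have h1 : εc p.1 * εc p.2 = -1 := by
          by_cases ha : ε p.1
          · have hb : ε p.2 = false := by
              cases hbv : ε p.2
              · rfl
              · exact absurd (by rw [hbv, ha]) hp
            simp [hεcdef, ha, hb]
          · have hb : ε p.2 = true := by
              cases hbv : ε p.2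
              · exact absurd (by rw [hbv]; simpa using ha) hp
              · rfl
            simp [hεcdef, ha, hb]
        rw [h1]; norm_num
      have hne : p.1 ≠ p.2 := fun h => hp (by rw [h])
      have hBH : (A p.1 * A p.2)ᴴ = A p.2 * A p.1 := by
        rw [conjTranspose_mul, hA_herm, hA_herm]
      have hfun : (fun a b => (if a = p.1 ∧ b = p.2 then A p.1 * A p.2 else 0)
            + (if a = p.2 ∧ b = p.1 then A p.2 * A p.1 else 0))
          = (fun a b => (if a = p.1 ∧ b = p.2 then A p.1 * A p.2 else 0)
            + (if a = p.2 ∧ b = p.1 then (A p.1 * A p.2)ᴴ else 0)) := by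
        rw [hBH]
      simp only [hpiecedef]
      rw [hc, one_smul, hfun, traceNorm_cross hne, hBH, if_neg hp, one_mul]
  -- put everything together
  have hchain : traceNorm (Hb * Hb - Qb * Qb)
      ≤ ∑ x, ∑ y, (if ε x = ε y then (0:ℝ) else 1)
          * (traceNorm (A x * A y) + traceNorm (A y * A x)) := by
    rw [hGsub, hdecomp]
    calc traceNorm (∑ p : ι × ι, piece p)
        ≤ ∑ p : ι × ι, traceNorm (piece p) :=
          traceNorm_sum_le Finset.univ piece (fun p _ => hherm p)
      _ = ∑ p : ι × ι, (if ε p.1 = ε p.2 then (0:ℝ) else 1)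
            * (traceNorm (A p.1 * A p.2) + traceNorm (A p.2 * A p.1)) :=
          Finset.sum_congr rfl fun p _ => hpiece_norm p
      _ = ∑ x, ∑ y, (if ε x = ε y then (0:ℝ) else 1)
            * (traceNorm (A x * A y) + traceNorm (A y * A x)) := by
          rw [Fintype.sum_prod_type]
  rw [← htr1re]
  exact le_trans hPS hchain



end StmtAux

/-- Pretty good measurement success bound under a complement-fidelity assumption. -/
theorem stmt_5 {n : ℕ} (δ : ℝ) (hδ0 : 0 ≤ δ) (hδ1 : δ ≤ 1/2)
    (σ : Bool × Bool → Matrix (Fin n) (Fin n) ℂ)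
    (hσ : ∀ x, IsDensityMatrix (σ x))
    (hS : (∑ x : Bool × Bool, σ x).PosDef)
    (hcomp : ∀ x : Bool × Bool,
      fidelity (σ x) (σ (!x.1, !x.2)) ≤ 2 * Real.sqrt (δ * (1 - δ)))
    (f : ℝ)
    (hf : IsGreatest {y : ℝ | ∃ x x' : Bool × Bool, x ≠ x' ∧ y = fidelity (σ x) (σ x')} f) :
    (1/4 : ℝ) * ∑ x : Bool × Bool,
        ((((CFC.sqrt (∑ x : Bool × Bool, σ x))⁻¹ * σ x * (CFC.sqrt (∑ x : Bool × Bool, σ x))⁻¹) * σ x).trace).re ≥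
      1 - f - Real.sqrt (δ * (1 - δ)) := by
  classical
  open StmtAux in
  show _ ≤ _
  set S := ∑ x : Bool × Bool, σ x with hSdef
  set Sq := CFC.sqrt S with hSqdef
  set M := Sq⁻¹ with hMdef
  set A : Bool × Bool → Matrix (Fin n) (Fin n) ℂ := fun x => psdSqrt (σ x) with hAdef
  have hAeq : ∀ x, A x = CFC.sqrt (σ x) := fun x => dif_pos (hσ x).1
  have hA_psd : ∀ x, (A x).PosSemidef := fun x => by
    rw [hAeq]; exact StmtAux.psd_sqrt_psd (hσ x).1
  have hA_herm : ∀ x, (A x)ᴴ = A x := fun x => (hA_psd x).1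
  have hAA : ∀ x, A x * A x = σ x := fun x => by
    rw [hAeq]; exact StmtAux.psd_sqrt_mul_self (hσ x).1
  have hSq_psd : Sq.PosSemidef := StmtAux.psd_sqrt_psd hS.posSemidef
  have hSqSq : Sq * Sq = S := StmtAux.psd_sqrt_mul_self hS.posSemidef
  have hdetS : S.det ≠ 0 := ne_of_gt hS.det_pos
  have hdetSq : Sq.det ≠ 0 := by
    intro h
    exact hdetS (by rw [← hSqSq, Matrix.det_mul, h, mul_zero])
  have hMSq : M * Sq = 1 := by
    rw [hMdef]; exact Matrix.nonsing_inv_mul Sq (Ne.isUnit hdetSq)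
  have hSqM : Sq * M = 1 := by
    rw [hMdef]; exact Matrix.mul_nonsing_inv Sq (Ne.isUnit hdetSq)
  have hMSM : M * S * M = 1 := by
    rw [← hSqSq]
    calc M * (Sq * Sq) * M = M * (Sq * (Sq * M)) := by simp only [Matrix.mul_assoc]
      _ = M * Sq := by rw [hSqM, Matrix.mul_one]
      _ = 1 := hMSq
  have hR4R4 : CFC.sqrt Sq * CFC.sqrt Sq = Sq := StmtAux.psd_sqrt_mul_self hSq_psd
  have hR4herm : (CFC.sqrt Sq)ᴴ = CFC.sqrt Sq := (StmtAux.psd_sqrt_psd hSq_psd).1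
  set rootM := (CFC.sqrt Sq)⁻¹ with hrootMdef
  have hrootM2 : rootM * rootM = M := by
    have h' : Sq⁻¹ = (CFC.sqrt Sq * CFC.sqrt Sq)⁻¹ := by rw [hR4R4]
    rw [hrootMdef, hMdef, h', Matrix.mul_inv_rev]
  have hrootM_herm : rootMᴴ = rootM := by
    rw [hrootMdef, Matrix.conjTranspose_nonsing_inv, hR4herm]
  have hMSM' : M * (∑ z : Bool × Bool, A z * A z) * M = 1 := by
    have hz : (∑ z : Bool × Bool, A z * A z) = S := by
      rw [hSdef]; exact Finset.sum_congr rfl fun z _ => hAA z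
    rw [hz]; exact hMSM
  -- row sums of the Gram-like trace array
  have hrowC : ∀ x, (∑ y : Bool × Bool, (M * σ x * M * σ y).trace) = 1 := by
    intro x
    have h0 : (∑ y : Bool × Bool, (M * σ x * M * σ y).trace)
        = (M * σ x * M * S).trace := by
      rw [← trace_sum]
      congr 1
      rw [hSdef, ← Finset.mul_sum]
    rw [h0]
    have h1 : M * σ x * M * S = (M * σ x) * (M * S) := by
      simp only [Matrix.mul_assoc]
    have h2 : (M * S) * (M * σ x) = (M * S * M) * σ x := by
      simp only [Matrix.mul_assoc]
    rw [h1, trace_mul_comm, h2, hMSM, Matrix.one_mul]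
    exact (hσ x).2
  have hrowR : ∀ x, (∑ y : Bool × Bool, ((M * σ x * M * σ y).trace).re) = 1 := by
    intro x
    rw [← Complex.re_sum, hrowC, Complex.one_re]
  -- fidelity identification
  have hFid : ∀ x y, traceNorm (A x * A y) = fidelity (σ x) (σ y) := fun x y => rfl
  -- the three bipartitions
  have key1 := key_eps A M rootM hA_herm hrootM_herm hrootM2 hMSM' (fun p => p.1)
  have key2 := key_eps A M rootM hA_herm hrootM_herm hrootM2 hMSM' (fun p => p.2)
  have key3 := key_eps A M rootM hA_herm hrootM_herm hrootM2 hMSM' (fun p => xor p.1 p.2)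
  simp only [hFid] at key1 key2 key3
  simp only [hAA] at key1 key2 key3
  -- upper bounds on fidelities
  have hub : ∀ x y : Bool × Bool, x ≠ y → fidelity (σ x) (σ y) ≤ f :=
    fun x y hxy => hf.2 ⟨x, y, hxy, rfl⟩
  have hc1 := hcomp (true, true)
  have hc2 := hcomp (true, false)
  have hc3 := hcomp (false, true)
  have hc4 := hcomp (false, false)
  simp only [Bool.not_true, Bool.not_false] at hc1 hc2 hc3 hc4
  have hr1 := hrowR (true, true)
  have hr2 := hrowR (true, false)
  have hr3 := hrowR (false, true)
  have hr4 := hrowR (false, false)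
  -- expand all finite sums
  simp only [Fintype.sum_prod_type, Fintype.sum_bool] at key1 key2 key3 hr1 hr2 hr3 hr4 ⊢
  norm_num at key1 key2 key3
  linarith [hub (true, true) (true, false) (by decide),
    hub (true, true) (false, true) (by decide),
    hub (true, false) (true, true) (by decide),
    hub (true, false) (false, false) (by decide),
    hub (false, true) (true, true) (by decide),
    hub (false, true) (false, false) (by decide),
    hub (false, false) (true, false) (by decide),
    hub (false, false) (false, true) (by decide),
    hc1, hc2, hc3, hc4, hr1, hr2, hr3, hr4, key1, key2, key3]
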